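/- Suppose no orbit of the partition is a two-element set {x,y} with π(x) = π(y). Then for every π-stationary stochastic matrix P, the following are equivalent: GPG = P; MPM = P; BPB = P. In other words, the invariant sets 𝐆 := {P π-stationary : GPG = P}, 𝐌 := {P π-stationary : MPM = P} and 𝐁 := {P π-stationary : BPB = P} coincide. -/

import Mathlib

open Matrix Finset

/-- Total mass of the orbit (block) `i` under `π`. -/
noncomputable def orbMass {n k : ℕ} (π : Fin n → ℝ) (part : Fin n → Fin k) (i : Fin k) : ℝ :=
  ∑ z ∈ Finset.univ.filter (fun z => part z = i), π z

/-- Number of states in the orbit (block) `i`. -/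
def orbCard {n k : ℕ} (part : Fin n → Fin k) (i : Fin k) : ℕ :=
  (Finset.univ.filter (fun z => part z = i)).card

/-- The Gibbs orbit kernel. -/
noncomputable def gibbsKer {n k : ℕ} (π : Fin n → ℝ) (part : Fin n → Fin k) :
    Matrix (Fin n) (Fin n) ℝ :=
  Matrix.of fun x y => if part y = part x then π y / orbMass π part (part x) else 0

/-- The Metropolis–Hastings orbit kernel. -/
noncomputable def mhKer {n k : ℕ} (π : Fin n → ℝ) (part : Fin n → Fin k) :
    Matrix (Fin n) (Fin n) ℝ :=
  Matrix.of fun x y =>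
    if x = y then
      1 - ∑ z ∈ Finset.univ.filter (fun z => z ≠ x ∧ part z = part x),
            min 1 (π z / π x) / ((orbCard part (part x) : ℝ) - 1)
    else if part y = part x then
      min 1 (π y / π x) / ((orbCard part (part x) : ℝ) - 1)
    else 0

/-- The Barker orbit kernel. -/
noncomputable def barkerKer {n k : ℕ} (π : Fin n → ℝ) (part : Fin n → Fin k) :
    Matrix (Fin n) (Fin n) ℝ :=
  Matrix.of fun x y =>
    if x = y then
      1 - ∑ z ∈ Finset.univ.filter (fun z => z ≠ x ∧ part z = part x),
            (π z / (π x + π z)) / ((orbCard part (part x) : ℝ) - 1)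
    else if part y = part x then
      (π y / (π x + π y)) / ((orbCard part (part x) : ℝ) - 1)
    else 0



lemma sandwich {N : ℕ} (S Q : Matrix (Fin N) (Fin N) ℝ) (hS : S.IsHermitian)
    (h1 : ∀ v : Fin N → ℝ, v ⬝ᵥ (S *ᵥ v) ≤ v ⬝ᵥ v)
    (h2 : ∀ v : Fin N → ℝ, v ≠ 0 → -(v ⬝ᵥ v) < v ⬝ᵥ (S *ᵥ v))
    (hQ : S * Q * S = Q) : S * Q = Q ∧ Q * S = Q := by
  set U : Matrix (Fin N) (Fin N) ℝ := (hS.eigenvectorUnitary : Matrix (Fin N) (Fin N) ℝ) with hU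
  have hUU : star U * U = 1 := by
    rw [hU, ← Unitary.coe_star]
    exact_mod_cast Unitary.coe_star_mul_self _
  have hUU' : U * star U = 1 := by
    rw [hU, ← Unitary.coe_star]
    exact_mod_cast Unitary.coe_mul_star_self _
  set lam : Fin N → ℝ := hS.eigenvalues with hlam
  have hspec : S = U * diagonal lam * star U := by
    have := hS.spectral_theorem
    simpa [RCLike.ofReal_real_eq_id] using this
  -- eigenvalue bounds
  have hvec : ∀ i, S *ᵥ ⇑(hS.eigenvectorBasis i) = lam i • ⇑(hS.eigenvectorBasis i) :=
    fun i => hS.mulVec_eigenvectorBasis i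
  have hne : ∀ i, (⇑(hS.eigenvectorBasis i) : Fin N → ℝ) ≠ 0 := by
    intro i h
    have := hS.eigenvectorBasis.orthonormal.ne_zero i
    apply this
    ext j
    exact congrFun h j
  have hpos : ∀ i, 0 < (⇑(hS.eigenvectorBasis i) : Fin N → ℝ) ⬝ᵥ ⇑(hS.eigenvectorBasis i) := by
    intro i
    have h0 : (⇑(hS.eigenvectorBasis i) : Fin N → ℝ) ⬝ᵥ ⇑(hS.eigenvectorBasis i)
        = ∑ j, (hS.eigenvectorBasis i j)^2 := by
      simp [dotProduct, sq]
    rw [h0]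
    apply Finset.sum_pos'
    · intro j _; positivity
    · obtain ⟨j, hj⟩ := Function.ne_iff.mp (hne i)
      refine ⟨j, Finset.mem_univ j, ?_⟩
      have hj' : hS.eigenvectorBasis i j ≠ 0 := hj
      positivity
  have hle : ∀ i, lam i ≤ 1 := by
    intro i
    have h := h1 (⇑(hS.eigenvectorBasis i))
    rw [hvec i, dotProduct_smul, smul_eq_mul] at h
    nlinarith [hpos i]
  have hgt : ∀ i, -1 < lam i := by
    intro i
    have h := h2 (⇑(hS.eigenvectorBasis i)) (hne i)
    rw [hvec i, dotProduct_smul, smul_eq_mul] at h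
    nlinarith [hpos i]
  -- R := star U * Q * U satisfies  diagonal lam * R * diagonal lam = R
  set R : Matrix (Fin N) (Fin N) ℝ := star U * Q * U with hR
  have hQR : Q = U * R * star U := by
    rw [hR]
    calc Q = (U * star U) * Q * (U * star U) := by rw [hUU']; simp
    _ = U * (star U * Q * U) * star U := by noncomm_ring
  have hDRD : diagonal lam * R * diagonal lam = R := by
    have : U * (diagonal lam * R * diagonal lam) * star U = U * R * star U := by
      calc U * (diagonal lam * R * diagonal lam) * star U
          = (U * diagonal lam * star U) * (U * R * star U) * (U * diagonal lam * star U) := by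
            rw [hR]
            calc U * (diagonal lam * (star U * Q * U) * diagonal lam) * star U
                = U * diagonal lam * (star U * Q * U) * diagonal lam * star U := by noncomm_ring
              _ = (U * diagonal lam * star U) * (U * ((star U) * Q * U) * star U)
                    * (U * diagonal lam * star U) := by
                  rw [show U * ((star U) * Q * U) * star U = (U * star U) * Q * (U * star U) by
                    noncomm_ring, hUU']
                  noncomm_ring [hUU']
        _ = S * Q * S := by rw [← hspec, ← hQR]
        _ = Q := hQ
        _ = U * R * star U := hQR
    have h2' := congrArg (fun M => star U * M * U) this
    calc diagonal lam * R * diagonal lam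
        = (star U * U) * (diagonal lam * R * diagonal lam) * (star U * U) := by rw [hUU]; simp
      _ = star U * (U * (diagonal lam * R * diagonal lam) * star U) * U := by noncomm_ring
      _ = star U * (U * R * star U) * U := by rw [this]
      _ = (star U * U) * R * (star U * U) := by noncomm_ring
      _ = R := by rw [hUU]; simp
  have hentry : ∀ i j, lam i * R i j * lam j = R i j := by
    intro i j
    have := congrFun (congrFun hDRD i) j
    rwa [Matrix.mul_diagonal, Matrix.diagonal_mul] at this
  have hone : ∀ i j, R i j ≠ 0 → lam i = 1 ∧ lam j = 1 := by
    intro i j hij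
    have h := hentry i j
    have hprod : lam i * lam j = 1 := by
      have : (lam i * lam j - 1) * R i j = 0 := by linarith [h]
      rcases mul_eq_zero.mp this with h' | h'
      · linarith
      · exact absurd h' hij
    have hi1 := hle i; have hj1 := hle j; have hi2 := hgt i; have hj2 := hgt j
    constructor <;> nlinarith
  have hDR : diagonal lam * R = R := by
    ext i j
    rw [Matrix.diagonal_mul]
    by_cases h : R i j = 0
    · simp [h]
    · rw [(hone i j h).1, one_mul]
  have hRD : R * diagonal lam = R := by
    ext i j
    rw [Matrix.mul_diagonal]
    by_cases h : R i j = 0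
    · simp [h]
    · rw [(hone i j h).2, mul_one]
  constructor
  · calc S * Q = (U * diagonal lam * star U) * (U * R * star U) := by rw [← hspec, ← hQR]
      _ = U * (diagonal lam * (star U * U) * R) * star U := by noncomm_ring
      _ = U * (diagonal lam * R) * star U := by rw [hUU]; noncomm_ring
      _ = U * R * star U := by rw [hDR]
      _ = Q := hQR.symm
  · calc Q * S = (U * R * star U) * (U * diagonal lam * star U) := by rw [← hspec, ← hQR]
      _ = U * (R * (star U * U) * diagonal lam) * star U := by noncomm_ring
      _ = U * (R * diagonal lam) * star U := by rw [hUU]; noncomm_ring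
      _ = U * R * star U := by rw [hRD]
      _ = Q := hQR.symm


section kern
variable {n k : ℕ} {π : Fin n → ℝ} {part : Fin n → Fin k}

structure IsGoodKer (π : Fin n → ℝ) (part : Fin n → Fin k)
    (K : Matrix (Fin n) (Fin n) ℝ) : Prop where
  rowsum : ∀ x, ∑ y, K x y = 1
  supp : ∀ x y, part y ≠ part x → K x y = 0
  pos : ∀ x y, x ≠ y → part y = part x → 0 < K x y
  rev : ∀ x y, π x * K x y = π y * K y x
  nonneg : ∀ x y, 0 ≤ K x y
  ap : ∀ u : Fin n → ℝ, (∀ x y, 0 < K x y → u x + u y = 0) → u = 0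

/-- conjugation by diag(sqrt π) -/
noncomputable def conj (π : Fin n → ℝ) (A : Matrix (Fin n) (Fin n) ℝ) :
    Matrix (Fin n) (Fin n) ℝ :=
  Matrix.of fun x y => Real.sqrt (π x) * A x y * (Real.sqrt (π y))⁻¹

lemma conj_apply (A : Matrix (Fin n) (Fin n) ℝ) (x y : Fin n) :
    conj π A x y = Real.sqrt (π x) * A x y * (Real.sqrt (π y))⁻¹ := rfl

lemma sqrt_pos' (hπ : ∀ x, 0 < π x) (x : Fin n) : 0 < Real.sqrt (π x) :=
  Real.sqrt_pos.mpr (hπ x)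

lemma sqrt_sq' (hπ : ∀ x, 0 < π x) (x : Fin n) :
    Real.sqrt (π x) * Real.sqrt (π x) = π x :=
  Real.mul_self_sqrt (le_of_lt (hπ x))

lemma conjS_mul (hπ : ∀ x, 0 < π x) (A B : Matrix (Fin n) (Fin n) ℝ) :
    conj π (A * B) = conj π A * conj π B := by
  ext x y
  simp only [conj_apply, Matrix.mul_apply, conj_apply]
  rw [Finset.mul_sum, Finset.sum_mul]
  congr 1; ext z
  have hz : (Real.sqrt (π z))⁻¹ * Real.sqrt (π z) = 1 := inv_mul_cancel₀ (sqrt_pos' hπ z).ne'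
  linear_combination (-(Real.sqrt (π x) * A x z * B z y * (Real.sqrt (π y))⁻¹)) * hz

lemma conj_inj (hπ : ∀ x, 0 < π x) {A B : Matrix (Fin n) (Fin n) ℝ}
    (h : conj π A = conj π B) : A = B := by
  ext x y
  have := congrFun (congrFun h x) y
  simp only [conj_apply] at this
  have hx := (sqrt_pos' hπ x).ne'
  have hy := (sqrt_pos' hπ y).ne'
  field_simp at this
  linarith

lemma conj_herm (hπ : ∀ x, 0 < π x) {K : Matrix (Fin n) (Fin n) ℝ}
    (hrev : ∀ x y, π x * K x y = π y * K y x) : (conj π K).IsHermitian := by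
  rw [Matrix.IsHermitian]
  ext x y
  rw [Matrix.conjTranspose_apply, star_trivial, conj_apply, conj_apply]
  have hx := (sqrt_pos' hπ x).ne'
  have hy := (sqrt_pos' hπ y).ne'
  have h := hrev x y
  rw [← sqrt_sq' hπ x, ← sqrt_sq' hπ y] at h
  field_simp
  nlinarith [h]

lemma statn (hπ : ∀ x, 0 < π x) {K : Matrix (Fin n) (Fin n) ℝ}
    (hK : IsGoodKer π part K) (y : Fin n) : ∑ x, π x * K x y = π y := by
  calc ∑ x, π x * K x y = ∑ x, π y * K y x := by
        congr 1; ext x; exact hK.rev x y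
    _ = π y * ∑ x, K y x := by rw [Finset.mul_sum]
    _ = π y := by rw [hK.rowsum, mul_one]

lemma quad_eq (hπ : ∀ x, 0 < π x) (K : Matrix (Fin n) (Fin n) ℝ) (v : Fin n → ℝ) :
    v ⬝ᵥ (conj π K *ᵥ v)
      = ∑ x, ∑ y, π x * K x y * (v x / Real.sqrt (π x)) * (v y / Real.sqrt (π y)) := by
  simp only [dotProduct, Matrix.mulVec, dotProduct, conj_apply, Finset.mul_sum]
  congr 1; ext x; congr 1; ext y
  have hx := (sqrt_pos' hπ x).ne'
  have hy := (sqrt_pos' hπ y).ne'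
  rw [← sqrt_sq' hπ x]
  field_simp
  rw [Real.sqrt_sq (Real.sqrt_nonneg _)]

lemma norm_eq (hπ : ∀ x, 0 < π x) (v : Fin n → ℝ) :
    v ⬝ᵥ v = ∑ x, π x * (v x / Real.sqrt (π x))^2 := by
  simp only [dotProduct]
  congr 1; ext x
  have hx := (sqrt_pos' hπ x).ne'
  rw [← sqrt_sq' hπ x]
  field_simp
  rw [Real.sqrt_sq (Real.sqrt_nonneg _)]

lemma dirichlet (hπ : ∀ x, 0 < π x) {K : Matrix (Fin n) (Fin n) ℝ}
    (hK : IsGoodKer π part K) (u : Fin n → ℝ) (ε : ℝ) :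
    ∑ x, ∑ y, π x * K x y * (u x + ε * u y)^2
      = (1 + ε^2) * (∑ x, π x * u x^2) + 2*ε * ∑ x, ∑ y, π x * K x y * u x * u y := by
  have hA : ∑ x, ∑ y, π x * K x y * (u x)^2 = ∑ x, π x * u x ^2 := by
    congr 1; ext x
    rw [show ∑ y, π x * K x y * u x^2 = (π x * u x^2) * ∑ y, K x y by
      rw [Finset.mul_sum]; congr 1; ext y; ring]
    rw [hK.rowsum, mul_one]
  have hC : ∑ x, ∑ y, π x * K x y * (u y)^2 = ∑ x, π x * u x ^2 := by
    rw [Finset.sum_comm]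
    congr 1; ext y
    rw [show ∑ x, π x * K x y * u y^2 = (∑ x, π x * K x y) * u y^2 by
      rw [Finset.sum_mul]]
    rw [statn hπ hK]
  calc ∑ x, ∑ y, π x * K x y * (u x + ε * u y)^2
      = ∑ x, ∑ y, (π x * K x y * (u x)^2 + ε^2 * (π x * K x y * (u y)^2)
          + 2*ε*(π x * K x y * u x * u y)) := by
        congr 1; ext x; congr 1; ext y; ring
    _ = (∑ x, ∑ y, π x * K x y * (u x)^2) + ε^2 * (∑ x, ∑ y, π x * K x y * (u y)^2)
          + 2*ε* ∑ x, ∑ y, π x * K x y * u x * u y := by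
        rw [Finset.mul_sum, Finset.mul_sum]
        rw [← Finset.sum_add_distrib, ← Finset.sum_add_distrib]
        congr 1; ext x
        rw [Finset.mul_sum, Finset.mul_sum, ← Finset.sum_add_distrib, ← Finset.sum_add_distrib]
    _ = _ := by rw [hA, hC]; ring

lemma quad_le (hπ : ∀ x, 0 < π x) {K : Matrix (Fin n) (Fin n) ℝ}
    (hK : IsGoodKer π part K) (v : Fin n → ℝ) :
    v ⬝ᵥ (conj π K *ᵥ v) ≤ v ⬝ᵥ v := by
  set u : Fin n → ℝ := fun x => v x / Real.sqrt (π x) with hu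
  have h := dirichlet hπ hK u (-1)
  have hnn : 0 ≤ ∑ x, ∑ y, π x * K x y * (u x + (-1) * u y)^2 := by
    apply Finset.sum_nonneg; intro x _; apply Finset.sum_nonneg; intro y _
    have := hK.nonneg x y; have := (hπ x).le; positivity
  rw [quad_eq hπ K v, norm_eq hπ v]
  nlinarith [h, hnn]

lemma quad_gt (hπ : ∀ x, 0 < π x) {K : Matrix (Fin n) (Fin n) ℝ}
    (hK : IsGoodKer π part K) (v : Fin n → ℝ) (hv : v ≠ 0) :
    -(v ⬝ᵥ v) < v ⬝ᵥ (conj π K *ᵥ v) := by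
  set u : Fin n → ℝ := fun x => v x / Real.sqrt (π x) with hu
  have h := dirichlet hπ hK u 1
  have hpos : 0 < ∑ x, ∑ y, π x * K x y * (u x + 1 * u y)^2 := by
    rcases lt_or_eq_of_le (α := ℝ) (a := 0)
        (b := ∑ x, ∑ y, π x * K x y * (u x + 1 * u y)^2)
        (Finset.sum_nonneg fun x _ => Finset.sum_nonneg fun y _ => by
          have := hK.nonneg x y; have := (hπ x).le; positivity) with h' | h'
    · exact h'
    · exfalso
      -- all terms vanish, hence u = 0, hence v = 0
      have hzero : ∀ x ∈ (Finset.univ : Finset (Fin n)), ∀ y ∈ (Finset.univ : Finset (Fin n)),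
          π x * K x y * (u x + 1 * u y)^2 = 0 := by
        have h1 := (Finset.sum_eq_zero_iff_of_nonneg
          (fun x _ => Finset.sum_nonneg fun y _ => by
            have := hK.nonneg x y; have := (hπ x).le; positivity)).mp h'.symm
        intro x hx y hy
        exact (Finset.sum_eq_zero_iff_of_nonneg (fun y _ => by
          have := hK.nonneg x y; have := (hπ x).le; positivity)).mp (h1 x hx) y hy
      have hu0 : u = 0 := by
        apply hK.ap
        intro x y hKxy
        have := hzero x (Finset.mem_univ x) y (Finset.mem_univ y)
        have hπx := hπ x
        have h2 : (u x + u y)^2 = 0 := by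
          have hne : π x * K x y ≠ 0 := by positivity
          have : (u x + 1 * u y)^2 = 0 := by
            rcases mul_eq_zero.mp this with h | h
            · exact absurd h hne
            · exact h
          simpa using this
        exact by nlinarith [h2, sq_nonneg (u x + u y)]
      apply hv
      ext x
      have : u x = 0 := congrFun hu0 x
      have hx := (sqrt_pos' hπ x).ne'
      rw [hu] at this
      simp only at this
      field_simp at this
      simpa using this
  rw [quad_eq hπ K v, norm_eq hπ v]
  nlinarith [h, hpos]

end kern

section kern
variable {n k : ℕ} {π : Fin n → ℝ} {part : Fin n → Fin k}

lemma orbMass_pos (hπ : ∀ x, 0 < π x) (x : Fin n) : 0 < orbMass π part (part x) := by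
  apply Finset.sum_pos
  · intro z _; exact hπ z
  · exact ⟨x, by simp⟩

lemma gibbs_apply (x y : Fin n) :
    gibbsKer π part x y = if part y = part x then π y / orbMass π part (part x) else 0 := rfl

lemma gibbs_rowsum (hπ : ∀ x, 0 < π x) (x : Fin n) : ∑ y, gibbsKer π part x y = 1 := by
  rw [show ∑ y, gibbsKer π part x y
      = ∑ y ∈ Finset.univ.filter (fun z => part z = part x), π y / orbMass π part (part x) by
    rw [Finset.sum_filter]; rfl]
  rw [← Finset.sum_div, ← orbMass]
  exact div_self (orbMass_pos hπ x).ne'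

lemma gibbs_good (hπ : ∀ x, 0 < π x) : _root_.IsGoodKer π part (gibbsKer π part) where
  rowsum := gibbs_rowsum hπ
  supp := fun x y h => by rw [gibbs_apply, if_neg h]
  pos := fun x y _ h => by
    rw [gibbs_apply, if_pos h]
    exact div_pos (hπ y) (orbMass_pos hπ x)
  rev := fun x y => by
    by_cases h : part y = part x
    · rw [gibbs_apply, gibbs_apply, if_pos h, if_pos h.symm, h]
      ring
    · rw [gibbs_apply, gibbs_apply, if_neg h, if_neg (fun h' => h h'.symm), mul_zero, mul_zero]
  nonneg := fun x y => by
    rw [gibbs_apply]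
    split
    · exact le_of_lt (div_pos (hπ y) (orbMass_pos hπ x))
    · exact le_refl 0
  ap := fun u hu => by
    ext x
    have hd : 0 < gibbsKer π part x x := by
      rw [gibbs_apply, if_pos rfl]
      exact div_pos (hπ x) (orbMass_pos hπ x)
    have := hu x x hd
    simp only [Pi.zero_apply]
    linarith

/-- maximum principle: fixed vectors of a good kernel are constant on orbits -/
lemma fixed_const (hπ : ∀ x, 0 < π x) {K : Matrix (Fin n) (Fin n) ℝ}
    (hK : IsGoodKer π part K) (v : Fin n → ℝ)
    (hv : ∀ x, ∑ z, K x z * v z = v x) :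
    ∀ x y, part x = part y → v x = v y := by
  have key : ∀ i : Fin k, ∀ x ∈ Finset.univ.filter (fun z => part z = i),
      ∀ y ∈ Finset.univ.filter (fun z => part z = i), v x = v y := by
    intro i
    set F := Finset.univ.filter (fun z => part z = i) with hF
    intro x hx y hy
    rcases Finset.exists_max_image F v ⟨x, hx⟩ with ⟨x₀, hx₀, hmax⟩
    have hx₀' : part x₀ = i := (Finset.mem_filter.mp hx₀).2
    -- all terms K x₀ z * (v x₀ - v z) are ≥ 0 and sum to 0
    have hsum0 : ∑ z, K x₀ z * (v x₀ - v z) = 0 := by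
      have h1 : ∑ z, K x₀ z * (v x₀ - v z)
          = (∑ z, K x₀ z) * v x₀ - ∑ z, K x₀ z * v z := by
        rw [Finset.sum_mul, ← Finset.sum_sub_distrib]
        congr 1; ext z; ring
      rw [h1, hK.rowsum, hv, one_mul, sub_self]
    have hterm : ∀ z ∈ Finset.univ, 0 ≤ K x₀ z * (v x₀ - v z) := by
      intro z _
      by_cases hz : part z = part x₀
      · have : z ∈ F := by rw [hF]; simp [hz, hx₀']
        have := hmax z this
        have := hK.nonneg x₀ z
        nlinarith
      · rw [hK.supp x₀ z hz, zero_mul]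
    have hzero := (Finset.sum_eq_zero_iff_of_nonneg hterm).mp hsum0
    have hconst : ∀ z ∈ F, v z = v x₀ := by
      intro z hz
      by_cases hzx : z = x₀
      · rw [hzx]
      · have hpz : part z = part x₀ := by
          rw [(Finset.mem_filter.mp hz).2, hx₀']
        have hKp := hK.pos x₀ z (fun h => hzx h.symm) hpz
        have := hzero z (Finset.mem_univ z)
        rcases mul_eq_zero.mp this with h | h
        · exact absurd h (ne_of_gt hKp)
        · linarith
    rw [hconst x hx, hconst y hy]
  intro x y hxy
  exact key (part y) x (by simp [hxy]) y (by simp)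


/-- the structure of invariant P: rows proportional to π on orbits, columns constant -/
lemma inv_structure (hπ : ∀ x, 0 < π x) {K : Matrix (Fin n) (Fin n) ℝ}
    (hK : IsGoodKer π part K) (P : Matrix (Fin n) (Fin n) ℝ) (h : K * P * K = P) :
    (∀ y x x', part x = part x' → P x y = P x' y) ∧
    (∀ x z z', part z = part z' → P x z * π z' = P x z' * π z) := by
  have hconj : conj π K * conj π P * conj π K = conj π P := by
    rw [← conjS_mul hπ, ← conjS_mul hπ, h]
  obtain ⟨hSQ, hQS⟩ := sandwich (conj π K) (conj π P) (conj_herm hπ hK.rev)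
      (quad_le hπ hK) (quad_gt hπ hK) hconj
  have hKP : K * P = P := conj_inj hπ (by rw [conjS_mul hπ]; exact hSQ)
  have hPK : P * K = P := conj_inj hπ (by rw [conjS_mul hπ]; exact hQS)
  constructor
  · intro y x x' hxx
    exact fixed_const hπ hK (fun z => P z y)
      (fun a => by
        have := congrFun (congrFun hKP a) y
        rwa [Matrix.mul_apply] at this) x x' hxx
  · intro x z z' hzz
    have hfix : ∀ y, ∑ w, K y w * (P x w / π w) = P x y / π y := by
      intro y
      have hPKxy : ∑ w, P x w * K w y = P x y := by
        have := congrFun (congrFun hPK x) y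
        rwa [Matrix.mul_apply] at this
      have hmul : π y * ∑ w, K y w * (P x w / π w) = π y * (P x y / π y) := by
        rw [Finset.mul_sum]
        have : ∀ w, π y * (K y w * (P x w / π w)) = P x w * K w y := by
          intro w
          have hrev := hK.rev y w
          have hw := (hπ w).ne'
          field_simp
          linear_combination P x w * hrev
        rw [Finset.sum_congr rfl (fun w _ => this w), hPKxy]
        field_simp
        exact (mul_div_cancel_right₀ _ (hπ y).ne').symm
      exact mul_left_cancel₀ (hπ y).ne' hmul
    have := fixed_const hπ hK (fun w => P x w / π w) hfix z z' hzz
    have hz := (hπ z).ne'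
    have hz' := (hπ z').ne'
    field_simp at this
    linarith [this]

lemma structure_inv (hπ : ∀ x, 0 < π x) {K : Matrix (Fin n) (Fin n) ℝ}
    (hK : IsGoodKer π part K) (P : Matrix (Fin n) (Fin n) ℝ)
    (hcol : ∀ y x x', part x = part x' → P x y = P x' y)
    (hrow : ∀ x z z', part z = part z' → P x z * π z' = P x z' * π z) :
    K * P * K = P := by
  have hKP : K * P = P := by
    ext x y
    rw [Matrix.mul_apply]
    have : ∀ z, K x z * P z y = K x z * P x y := by
      intro z
      by_cases hz : part z = part x
      · rw [hcol y z x hz]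
      · rw [hK.supp x z hz, zero_mul, zero_mul]
    rw [Finset.sum_congr rfl (fun z _ => this z), ← Finset.sum_mul, hK.rowsum, one_mul]
  have hPK : P * K = P := by
    ext x y
    rw [Matrix.mul_apply]
    have : ∀ z, P x z * K z y = (P x y / π y) * (π z * K z y) := by
      intro z
      by_cases hz : part z = part y
      · have h := hrow x z y hz
        have hy := (hπ y).ne'
        field_simp
        linear_combination K z y * h
      · rw [hK.supp z y (fun h' => hz h'.symm), mul_zero, mul_zero, mul_zero]
    rw [Finset.sum_congr rfl (fun z _ => this z), ← Finset.mul_sum, statn hπ hK]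
    have hy := (hπ y).ne'
    field_simp
  rw [hKP, hPK]

theorem goodKer_iff (hπ : ∀ x, 0 < π x) {K : Matrix (Fin n) (Fin n) ℝ}
    (hK : IsGoodKer π part K) (P : Matrix (Fin n) (Fin n) ℝ) :
    K * P * K = P ↔ gibbsKer π part * P * gibbsKer π part = P := by
  constructor
  · intro h
    obtain ⟨hc, hr⟩ := inv_structure hπ hK P h
    exact structure_inv hπ (gibbs_good hπ) P hc hr
  · intro h
    obtain ⟨hc, hr⟩ := inv_structure hπ (gibbs_good hπ) P h
    exact structure_inv hπ hK P hc hr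

end kern

noncomputable def genKer {n k : ℕ} (part : Fin n → Fin k) (g : Fin n → Fin n → ℝ) :
    Matrix (Fin n) (Fin n) ℝ :=
  Matrix.of fun x y =>
    if x = y then
      1 - ∑ z ∈ Finset.univ.filter (fun z => z ≠ x ∧ part z = part x),
            g x z / ((orbCard part (part x) : ℝ) - 1)
    else if part y = part x then
      g x y / ((orbCard part (part x) : ℝ) - 1)
    else 0

section gen
variable {n k : ℕ} {π : Fin n → ℝ} {part : Fin n → Fin k} {g : Fin n → Fin n → ℝ}

lemma mh_eq : mhKer π part = genKer part (fun x z => min 1 (π z / π x)) := rfl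

lemma barker_eq : barkerKer π part = genKer part (fun x z => π z / (π x + π z)) := rfl

lemma mem_F (x : Fin n) : x ∈ Finset.univ.filter (fun z => part z = part x) := by simp

lemma Fx_eq (x : Fin n) :
    Finset.univ.filter (fun z => z ≠ x ∧ part z = part x)
      = (Finset.univ.filter (fun z => part z = part x)).erase x := by
  ext z; simp [Finset.mem_erase, and_comm]

lemma card_Fx (x : Fin n) :
    (Finset.univ.filter (fun z => z ≠ x ∧ part z = part x)).card
      = orbCard part (part x) - 1 := by
  rw [Fx_eq, Finset.card_erase_of_mem (mem_F x)]; rfl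

lemma orbCard_pos (x : Fin n) : 1 ≤ orbCard part (part x) :=
  Finset.card_pos.mpr ⟨x, mem_F x⟩

lemma genKer_diag (x : Fin n) :
    genKer part g x x = 1 - ∑ z ∈ Finset.univ.filter (fun z => z ≠ x ∧ part z = part x),
      g x z / ((orbCard part (part x) : ℝ) - 1) := by
  simp [genKer]

lemma genKer_off {x y : Fin n} (hxy : x ≠ y) (h : part y = part x) :
    genKer part g x y = g x y / ((orbCard part (part x) : ℝ) - 1) := by
  simp [genKer, hxy, h]

lemma genKer_supp (x y : Fin n) (h : part y ≠ part x) : genKer part g x y = 0 := by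
  have hxy : x ≠ y := fun h' => h (h' ▸ rfl)
  simp [genKer, hxy, h]

lemma genKer_rowsum (x : Fin n) : ∑ y, genKer part g x y = 1 := by
  rw [← Finset.add_sum_erase _ _ (Finset.mem_univ x), genKer_diag]
  have h1 : ∑ y ∈ Finset.univ.erase x, genKer part g x y
      = ∑ y ∈ Finset.univ.filter (fun z => z ≠ x ∧ part z = part x),
          g x y / ((orbCard part (part x) : ℝ) - 1) := by
    have hset : Finset.univ.filter (fun z => z ≠ x ∧ part z = part x)
        = (Finset.univ.erase x).filter (fun z => part z = part x) := by
      ext z; simp [Finset.mem_erase, and_comm]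
    rw [hset, Finset.sum_filter]
    apply Finset.sum_congr rfl
    intro y hy
    have hyx : x ≠ y := fun h => (Finset.ne_of_mem_erase hy) h.symm
    by_cases h : part y = part x
    · rw [if_pos h, genKer_off hyx h]
    · rw [if_neg h, genKer_supp x y h]
  rw [h1]; ring

lemma genKer_pos (hπ : ∀ x, 0 < π x) (hg : ∀ x y, 0 < g x y)
    {x y : Fin n} (hxy : x ≠ y) (h : part y = part x) : 0 < genKer part g x y := by
  rw [genKer_off hxy h]
  apply div_pos (hg x y)
  have h2 : 2 ≤ orbCard part (part x) := by
    apply Finset.one_lt_card.mpr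
    exact ⟨x, mem_F x, y, by simp [h], fun h' => hxy h'⟩
  have : (2:ℝ) ≤ (orbCard part (part x) : ℝ) := by exact_mod_cast h2
  linarith

lemma genKer_nonneg (hg0 : ∀ x y, 0 ≤ g x y) (hg1 : ∀ x y, g x y ≤ 1) (x y : Fin n) :
    0 ≤ genKer part g x y := by
  by_cases hxy : x = y
  · subst hxy
    rw [genKer_diag]
    set m := orbCard part (part x) with hm
    have hm1 : 1 ≤ m := orbCard_pos x
    have hsum : ∑ z ∈ Finset.univ.filter (fun z => z ≠ x ∧ part z = part x),
        g x z / ((m : ℝ) - 1) ≤ 1 := by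
      rcases Nat.lt_or_ge m 2 with hm2 | hm2
      · have : m = 1 := by omega
        have hFx : (Finset.univ.filter (fun z => z ≠ x ∧ part z = part x)) = ∅ := by
          apply Finset.card_eq_zero.mp
          rw [card_Fx, ← hm, this]
        rw [hFx, Finset.sum_empty]; norm_num
      · have hm2' : (2:ℝ) ≤ (m:ℝ) := by exact_mod_cast hm2
        have hden : 0 < (m:ℝ) - 1 := by linarith
        calc ∑ z ∈ Finset.univ.filter (fun z => z ≠ x ∧ part z = part x),
              g x z / ((m : ℝ) - 1)
            ≤ ∑ z ∈ Finset.univ.filter (fun z => z ≠ x ∧ part z = part x),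
              1 / ((m : ℝ) - 1) := by
              apply Finset.sum_le_sum
              intro z _
              gcongr
              exact hg1 x z
          _ = (m - 1 : ℕ) * (1 / ((m:ℝ) - 1)) := by
              rw [Finset.sum_const, card_Fx, ← hm, nsmul_eq_mul]
          _ = 1 := by
              have : ((m - 1 : ℕ) : ℝ) = (m:ℝ) - 1 := by
                rw [Nat.cast_sub hm1]; norm_num
              rw [this]
              field_simp
    linarith
  · by_cases h : part y = part x
    · rw [genKer_off hxy h]
      apply div_nonneg (hg0 x y)
      have h1 : 1 ≤ orbCard part (part x) := orbCard_pos x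
      have : (1:ℝ) ≤ (orbCard part (part x) : ℝ) := by exact_mod_cast h1
      linarith
    · rw [genKer_supp x y h]

lemma genKer_rev (hg : ∀ x y, part y = part x → π x * g x y = π y * g y x) (x y : Fin n) :
    π x * genKer part g x y = π y * genKer part g y x := by
  by_cases hxy : x = y
  · subst hxy; rfl
  · by_cases h : part y = part x
    · rw [genKer_off hxy h, genKer_off (fun h' => hxy h'.symm) h.symm,
        show part y = part x from h]
      rw [mul_div_assoc', mul_div_assoc', hg x y h]
    · rw [genKer_supp x y h, genKer_supp y x (fun h' => h h'.symm), mul_zero, mul_zero]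

lemma genKer_diag_pos (hg0 : ∀ x y, 0 ≤ g x y) (x : Fin n)
    (hlt : ∀ z, z ≠ x → part z = part x → g x z < 1) : 0 < genKer part g x x := by
  rw [genKer_diag]
  set m := orbCard part (part x) with hm
  have hm1 : 1 ≤ m := orbCard_pos x
  rcases Nat.lt_or_ge m 2 with hm2 | hm2
  · have : m = 1 := by omega
    have hFx : (Finset.univ.filter (fun z => z ≠ x ∧ part z = part x)) = ∅ := by
      apply Finset.card_eq_zero.mp
      rw [card_Fx, ← hm, this]
    rw [hFx, Finset.sum_empty]; norm_num
  · have hm2' : (2:ℝ) ≤ (m:ℝ) := by exact_mod_cast hm2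
    have hden : 0 < (m:ℝ) - 1 := by linarith
    have hne : (Finset.univ.filter (fun z => z ≠ x ∧ part z = part x)).Nonempty := by
      rw [← Finset.card_pos, card_Fx, ← hm]; omega
    have hstrict : ∑ z ∈ Finset.univ.filter (fun z => z ≠ x ∧ part z = part x),
        g x z / ((m : ℝ) - 1)
        < ∑ z ∈ Finset.univ.filter (fun z => z ≠ x ∧ part z = part x),
        1 / ((m : ℝ) - 1) := by
      apply Finset.sum_lt_sum_of_nonempty hne
      intro z hz
      obtain ⟨hzx, hzp⟩ := (Finset.mem_filter.mp hz).2
      gcongr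
      exact hlt z hzx hzp
    have heq : ∑ z ∈ Finset.univ.filter (fun z => z ≠ x ∧ part z = part x),
        (1:ℝ) / ((m : ℝ) - 1) = 1 := by
      rw [Finset.sum_const, card_Fx, ← hm, nsmul_eq_mul]
      have : ((m - 1 : ℕ) : ℝ) = (m:ℝ) - 1 := by
        rw [Nat.cast_sub hm1]; norm_num
      rw [this]
      field_simp
    linarith

lemma min_mul_pi (hπ : ∀ x : Fin n, 0 < π x) (x y : Fin n) :
    π x * min 1 (π y / π x) = min (π x) (π y) := by
  rcases le_total (π y) (π x) with h | h
  · rw [min_eq_right (by rw [div_le_one (hπ x)]; exact h), min_eq_right h]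
    rw [mul_div_assoc']
    exact mul_div_cancel_left₀ _ (hπ x).ne'
  · rw [min_eq_left (by rw [le_div_iff₀ (hπ x)]; linarith), min_eq_left h, mul_one]

lemma mh_good (hπ : ∀ x : Fin n, 0 < π x)
    (hns : ¬ ∃ x y : Fin n, x ≠ y ∧ part x = part y ∧ orbCard part (part x) = 2 ∧ π x = π y) :
    IsGoodKer π part (mhKer π part) := by
  rw [mh_eq]
  push_neg at hns
  have hg0 : ∀ x y : Fin n, 0 ≤ min 1 (π y / π x) :=
    fun x y => le_min zero_le_one (le_of_lt (div_pos (hπ y) (hπ x)))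
  have hg1 : ∀ x y : Fin n, min 1 (π y / π x) ≤ 1 := fun x y => min_le_left _ _
  have hgpos : ∀ x y : Fin n, 0 < min 1 (π y / π x) :=
    fun x y => lt_min one_pos (div_pos (hπ y) (hπ x))
  refine ⟨genKer_rowsum, genKer_supp, fun x y hxy h => genKer_pos hπ hgpos hxy h,
    genKer_rev (fun x y _ => by rw [min_mul_pi hπ x y, min_mul_pi hπ y x, min_comm]),
    genKer_nonneg hg0 hg1, ?_⟩
  intro u hu
  ext x
  simp only [Pi.zero_apply]
  set m := orbCard part (part x) with hm
  have hm1 : 1 ≤ m := orbCard_pos x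
  rcases Nat.lt_or_ge m 2 with hm2 | hm2
  · -- singleton orbit
    have hd : 0 < genKer part (fun x z => min 1 (π z / π x)) x x := by
      apply genKer_diag_pos hg0
      intro z hzx hzp
      exfalso
      have hz : z ∈ Finset.univ.filter (fun z => z ≠ x ∧ part z = part x) := by
        simp [hzx, hzp]
      have := Finset.card_pos.mpr ⟨z, hz⟩
      rw [card_Fx, ← hm] at this
      omega
    have := hu x x hd
    linarith
  · rcases Nat.lt_or_ge m 3 with hm3 | hm3
    · -- two-element orbit
      have hcard : (Finset.univ.filter (fun z => z ≠ x ∧ part z = part x)).card = 1 := by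
        rw [card_Fx, ← hm]; omega
      obtain ⟨y, hy⟩ := Finset.card_eq_one.mp hcard
      have hymem : y ∈ Finset.univ.filter (fun z => z ≠ x ∧ part z = part x) := by
        rw [hy]; exact Finset.mem_singleton_self y
      obtain ⟨hyx, hyp⟩ := (Finset.mem_filter.mp hymem).2
      have huniq : ∀ z : Fin n, z ≠ x → part z = part x → z = y := by
        intro z hzx hzp
        have : z ∈ Finset.univ.filter (fun z => z ≠ x ∧ part z = part x) := by
          simp [hzx, hzp]
        rw [hy] at this
        exact Finset.mem_singleton.mp this
      have hm2' : m = 2 := by omega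
      have hne : π x ≠ π y := hns x y (fun h => hyx h.symm) hyp.symm (by rw [← hm]; exact hm2')
      rcases hne.lt_or_gt with hlt | hlt
      · -- π x < π y : use diagonal at y
        have hcard' : orbCard part (part y) = 2 := by rw [hyp, ← hm]; exact hm2'
        have huniq' : ∀ z : Fin n, z ≠ y → part z = part y → z = x := by
          intro z hzy hzp
          by_contra hzx
          have := huniq z hzx (by rw [hzp, hyp])
          exact hzy this
        have hdy : 0 < genKer part (fun x z => min 1 (π z / π x)) y y := by
          apply genKer_diag_pos hg0
          intro z hzy hzp
          rw [huniq' z hzy hzp]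
          calc min 1 (π x / π y) ≤ π x / π y := min_le_right _ _
            _ < 1 := by rw [div_lt_one (hπ y)]; exact hlt
        have h1 := hu y y hdy
        have h2 := hu x y (genKer_pos hπ hgpos (fun h => hyx h.symm) hyp)
        linarith
      · -- π y < π x : use diagonal at x
        have hdx : 0 < genKer part (fun x z => min 1 (π z / π x)) x x := by
          apply genKer_diag_pos hg0
          intro z hzx hzp
          rw [huniq z hzx hzp]
          calc min 1 (π y / π x) ≤ π y / π x := min_le_right _ _
            _ < 1 := by rw [div_lt_one (hπ x)]; exact hlt
        have := hu x x hdx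
        linarith
    · -- orbit with ≥ 3 elements
      have hcard : 2 ≤ (Finset.univ.filter (fun z => z ≠ x ∧ part z = part x)).card := by
        rw [card_Fx, ← hm]; omega
      obtain ⟨y, hy⟩ := Finset.card_pos.mp
        (show 0 < (Finset.univ.filter (fun z => z ≠ x ∧ part z = part x)).card by omega)
      obtain ⟨hyx, hyp⟩ := (Finset.mem_filter.mp hy).2
      have hcard2 : 0 < ((Finset.univ.filter
          (fun z => z ≠ x ∧ part z = part x)).erase y).card := by
        rw [Finset.card_erase_of_mem hy]; omega
      obtain ⟨z, hz⟩ := Finset.card_pos.mp hcard2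
      have hzy : z ≠ y := Finset.ne_of_mem_erase hz
      obtain ⟨hzx, hzp⟩ := (Finset.mem_filter.mp (Finset.mem_of_mem_erase hz)).2
      have e1 := hu x y (genKer_pos hπ hgpos (fun h => hyx h.symm) hyp)
      have e2 := hu x z (genKer_pos hπ hgpos (fun h => hzx h.symm) hzp)
      have e3 := hu y z (genKer_pos hπ hgpos (fun h => hzy h.symm)
        (by rw [hzp, hyp]))
      linarith

lemma barker_good (hπ : ∀ x : Fin n, 0 < π x) :
    IsGoodKer π part (barkerKer π part) := by
  rw [barker_eq]
  have hg0 : ∀ x y : Fin n, 0 ≤ π y / (π x + π y) :=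
    fun x y => le_of_lt (div_pos (hπ y) (by linarith [hπ x, hπ y]))
  have hg1 : ∀ x y : Fin n, π y / (π x + π y) ≤ 1 := fun x y => by
    rw [div_le_one (by linarith [hπ x, hπ y])]; linarith [hπ x]
  have hgpos : ∀ x y : Fin n, 0 < π y / (π x + π y) :=
    fun x y => div_pos (hπ y) (by linarith [hπ x, hπ y])
  refine ⟨genKer_rowsum, genKer_supp, fun x y hxy h => genKer_pos hπ hgpos hxy h,
    genKer_rev (fun x y _ => by
      have hxy : π x + π y ≠ 0 := ne_of_gt (by linarith [hπ x, hπ y])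
      have hyx : π y + π x ≠ 0 := ne_of_gt (by linarith [hπ x, hπ y])
      field_simp
      ring),
    genKer_nonneg hg0 hg1, ?_⟩
  intro u hu
  ext x
  simp only [Pi.zero_apply]
  have hd : 0 < genKer part (fun x z => π z / (π x + π z)) x x := by
    apply genKer_diag_pos hg0
    intro z hzx hzp
    rw [div_lt_one (by linarith [hπ x, hπ z])]
    linarith [hπ x]
  have := hu x x hd
  linarith

end gen

/-- if no orbit is a two-element set with equal `π`-masses, then for every
`π`-stationary stochastic `P`, the conditions `GPG = P`, `MPM = P`, `BPB = P` are
equivalent, i.e. the invariant sets 𝐆, 𝐌, 𝐁 coincide. -/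
theorem stmt9 {n k : ℕ} (hn : 0 < n)
    (π : Fin n → ℝ) (hπpos : ∀ x, 0 < π x) (hπsum : ∑ x, π x = 1)
    (part : Fin n → Fin k) (hpart : Function.Surjective part)
    (hns : ¬ ∃ x y : Fin n, x ≠ y ∧ part x = part y ∧ orbCard part (part x) = 2 ∧ π x = π y) :
    ∀ P : Matrix (Fin n) (Fin n) ℝ,
      (∀ x y, 0 ≤ P x y) → (∀ x, ∑ y, P x y = 1) → (∀ y, ∑ x, π x * P x y = π y) →
      ((gibbsKer π part * P * gibbsKer π part = P ↔ mhKer π part * P * mhKer π part = P) ∧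
       (gibbsKer π part * P * gibbsKer π part = P ↔
          barkerKer π part * P * barkerKer π part = P)) := by
  intro P _ _ _
  constructor
  · exact (goodKer_iff hπpos (mh_good hπpos hns) P).symm
  · exact (goodKer_iff hπpos (barker_good hπpos) P).symm
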